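/- Let X be a Vec-variety over a field K of characteristic zero, let V ∈ Vec, and let L be a field extension of K. Then for any L-valued point p of X(V) there exists a unique minimal L-subspace U of V ⊗_K L with p ∈ X_L(U); in particular, if p ∈ X_L(U1) and p ∈ X_L(U2) for L-subspaces U1, U2 of V ⊗_K L, then p ∈ X_L(U1 ∩ U2). -/

import Mathlib

open CategoryTheory

noncomputable section

variable (K : Type) [Field K]

/-- The coordinate ring of the affine space associated to a finite-dimensional
vector space `W`: a polynomial ring on a basis of `W`, i.e. the symmetric algebra
on the dual of `W`. -/
abbrev coordRing (W : Type) [AddCommGroup W] [Module K W] : Type :=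
  MvPolynomial (Fin (Module.finrank K W)) K

/-- Evaluation of a "polynomial function on `W`" at a point `w : W`. -/
def evalAt {W : Type} [AddCommGroup W] [Module K W] [FiniteDimensional K W]
    (w : W) : coordRing K W →+* K :=
  MvPolynomial.eval (fun i => (Module.finBasis K W).repr w i)

/-- `g` is the ring homomorphism between coordinate rings induced by the
(polynomial) map `f`. -/
def IsEvalCompat {W₁ W₂ : Type} [AddCommGroup W₁] [Module K W₁] [FiniteDimensional K W₁]
    [AddCommGroup W₂] [Module K W₂] [FiniteDimensional K W₂]
    (g : coordRing K W₂ →+* coordRing K W₁) (f : W₁ → W₂) : Prop :=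
  ∀ (p : coordRing K W₂) (w : W₁), evalAt K w (g p) = evalAt K (f w) p

/-- The ring homomorphism between coordinate rings induced by a polynomial map
`f : W₁ → W₂` (pullback of polynomial functions along `f`).  Since `K` is
infinite, such a ring homomorphism is unique if it exists; it exists whenever
`f` is a polynomial map. -/
def polyComap {W₁ W₂ : Type} [AddCommGroup W₁] [Module K W₁] [FiniteDimensional K W₁]
    [AddCommGroup W₂] [Module K W₂] [FiniteDimensional K W₂]
    (f : W₁ → W₂) : coordRing K W₂ →+* coordRing K W₁ :=
  letI := Classical.propDecidable
  if h : ∃ g, IsEvalCompat K g f then h.choose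
  else (MvPolynomial.C : K →+* coordRing K W₁).comp MvPolynomial.constantCoeff

/-- `f : V → W` is a polynomial map of degree at most `d`: in (any) coordinates,
`f` is given by polynomials of total degree at most `d`. -/
def IsPolynomialMap {V W : Type} [AddCommGroup V] [Module K V]
    [AddCommGroup W] [Module K W] (d : ℕ) (f : V → W) : Prop :=
  ∃ (n m : ℕ) (eV : (Fin n → K) ≃ₗ[K] V) (eW : W ≃ₗ[K] (Fin m → K))
    (p : Fin m → MvPolynomial (Fin n) K),
    (∀ i, (p i).totalDegree ≤ d) ∧
    ∀ x : Fin n → K, eW (f (eV x)) = fun i => MvPolynomial.eval x (p i)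

/-- A polynomial functor `P` on the category `Vec` of finite-dimensional
`K`-vector spaces: a functor such that all the maps
`Hom(U,V) → Hom(P(U),P(V))` are polynomial of degree bounded by `deg`. -/
structure PolyFunctor (K : Type) [Field K] where
  obj : FGModuleCat K → FGModuleCat K
  map : ∀ {U V : FGModuleCat K}, (U →ₗ[K] V) → (obj U →ₗ[K] obj V)
  map_id : ∀ U : FGModuleCat K, map (LinearMap.id (M := U)) = LinearMap.id
  map_comp : ∀ {U V W : FGModuleCat K} (φ : U →ₗ[K] V) (ψ : V →ₗ[K] W),
    map (ψ ∘ₗ φ) = map ψ ∘ₗ map φ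
  deg : ℕ
  map_poly : ∀ U V : FGModuleCat K,
    IsPolynomialMap K deg (fun φ : U →ₗ[K] V => (map φ : obj U →ₗ[K] obj V))

/-- A (closed) `Vec`-variety `X` inside the polynomial functor `P`: for every
finite-dimensional `V`, a reduced closed subscheme `X(V) ⊆ P(V)` (given by its
radical vanishing ideal in the coordinate ring of `P(V)`), such that
`P(φ)` maps `X(U)` into `X(V)` for every linear map `φ : U → V`. -/
structure VecVariety (K : Type) [Field K] (P : PolyFunctor K) where
  ideal : ∀ V : FGModuleCat K, Ideal (coordRing K (P.obj V))
  isRadical : ∀ V, (ideal V).IsRadical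
  mapsInto : ∀ {U V : FGModuleCat K} (φ : U →ₗ[K] V),
    ∀ f ∈ ideal V, polyComap K (fun u : P.obj U => P.map φ u) f ∈ ideal U

variable {K} {P : PolyFunctor K}

/-- A local ring is regular if it is Noetherian and its Krull dimension equals
the dimension of its cotangent space (equivalently, its maximal ideal is
generated by a regular system of parameters). -/
def IsRegularLocal (R : Type) [CommRing R] [IsLocalRing R] : Prop :=
  IsNoetherianRing R ∧
    ringKrullDim R =
      (Module.finrank (IsLocalRing.ResidueField R) (IsLocalRing.CotangentSpace R) : WithBot (WithTop ℕ))

/-- The underlying closed subset `X(V)` of the spectrum of the ambient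
coordinate ring. -/
def VecVariety.zeroSet (X : VecVariety K P) (V : FGModuleCat K) :
    Set (PrimeSpectrum (coordRing K (P.obj V))) :=
  PrimeSpectrum.zeroLocus (X.ideal V : Set (coordRing K (P.obj V)))

/-- The singular locus of the scheme `X(V) = Spec(K[P(V)]/I(X(V)))`, viewed
inside the spectrum of the ambient coordinate ring. -/
def VecVariety.singSet (X : VecVariety K P) (V : FGModuleCat K) :
    Set (PrimeSpectrum (coordRing K (P.obj V))) :=
  {p | ∃ q : PrimeSpectrum ((coordRing K (P.obj V)) ⧸ X.ideal V),
        PrimeSpectrum.comap (Ideal.Quotient.mk (X.ideal V)) q = p ∧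
        ¬ IsRegularLocal (Localization.AtPrime q.asIdeal)}

/-- `Y` is a closed `Vec`-subvariety of `X`. -/
def VecVariety.IsClosedSub (Y X : VecVariety K P) : Prop :=
  ∀ V, X.ideal V ≤ Y.ideal V

end
open scoped TensorProduct

noncomputable section

/-- Base-change data for a polynomial functor `P`: the canonical extension of the
polynomial maps `P_{U,V}` to points over field extensions `L` of `K`. -/
structure PolyFunctor.BaseChange {K : Type} [Field K] (P : PolyFunctor K) where
  mapL : ∀ (L : Type) [Field L] [Algebra K L] {U V : FGModuleCat K},
    ((L ⊗[K] U) →ₗ[L] (L ⊗[K] V)) → ((L ⊗[K] P.obj U) →ₗ[L] (L ⊗[K] P.obj V))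
  mapL_id : ∀ (L : Type) [Field L] [Algebra K L] (U : FGModuleCat K),
    mapL L (LinearMap.id : (L ⊗[K] U) →ₗ[L] (L ⊗[K] U)) = LinearMap.id
  mapL_comp : ∀ (L : Type) [Field L] [Algebra K L] {U V W : FGModuleCat K}
    (φ : (L ⊗[K] U) →ₗ[L] (L ⊗[K] V)) (ψ : (L ⊗[K] V) →ₗ[L] (L ⊗[K] W)),
    mapL L (ψ ∘ₗ φ) = mapL L ψ ∘ₗ mapL L φ
  mapL_poly : ∀ (L : Type) [Field L] [Algebra K L] (U V : FGModuleCat K),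
    IsPolynomialMap L P.deg (fun φ : (L ⊗[K] U) →ₗ[L] (L ⊗[K] V) => mapL L φ)
  mapL_base : ∀ (L : Type) [Field L] [Algebra K L] {U V : FGModuleCat K} (φ : U →ₗ[K] V),
    mapL L (LinearMap.baseChange L φ) = LinearMap.baseChange L (P.map φ)

/-- Evaluation of a polynomial function on `W` at an `L`-point `w ∈ L ⊗ W`. -/
def evalAtL (K : Type) [Field K] (L : Type) [Field L] [Algebra K L] {W : Type}
    [AddCommGroup W] [Module K W] [FiniteDimensional K W] (w : L ⊗[K] W) :
    coordRing K W →+* L :=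
  MvPolynomial.eval₂Hom (algebraMap K L)
    (fun i => ((Module.finBasis K W).baseChange L).repr w i)

/-- `p` is an `L`-point of `X_L(U)` for an `L`-subspace `U ⊆ L ⊗ V`: `p` is an
`L`-point of `X(V)` lying in the image of `P_L(U) → P_L(L ⊗ V)`; the latter image
is the image of `P_L(e)` for any (equivalently, every) projection `e` of `L ⊗ V`
with range `U`. -/
def VecVariety.MemL {K : Type} [Field K] {P : PolyFunctor K} (X : VecVariety K P)
    (bc : P.BaseChange) (L : Type) [Field L] [Algebra K L] {V : FGModuleCat K}
    (p : L ⊗[K] P.obj V) (U : Submodule L (L ⊗[K] V)) : Prop :=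
  (∀ f ∈ X.ideal V, evalAtL K L p f = 0) ∧
  ∃ e : (L ⊗[K] V) →ₗ[L] (L ⊗[K] V),
    e ∘ₗ e = e ∧ LinearMap.range e = U ∧ bc.mapL L e p = p

end

section Aux
variable {F M : Type*} [Field F] [AddCommGroup M] [Module F M]

/-- An idempotent fixes every element of its range. -/
lemma idem_fix {e : M →ₗ[F] M} (he : e ∘ₗ e = e) {x : M} (hx : x ∈ LinearMap.range e) :
    e x = x := by
  obtain ⟨y, rfl⟩ := hx
  exact DFunLike.congr_fun he y

/-- Extend a submodule disjoint from `U` to a full complement of `U`. -/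
lemma exists_compl_ge (U W₂ : Submodule F M) (hdisj : U ⊓ W₂ = ⊥) :
    ∃ C : Submodule F M, W₂ ≤ C ∧ IsCompl U C := by
  obtain ⟨D, hD⟩ := Submodule.exists_isCompl (U ⊔ W₂)
  refine ⟨W₂ ⊔ D, le_sup_left, ?_, ?_⟩
  · rw [disjoint_iff, Submodule.eq_bot_iff]
    intro x hx
    obtain ⟨hxU, hx2⟩ := Submodule.mem_inf.mp hx
    obtain ⟨w, hw, d, hd, rfl⟩ := Submodule.mem_sup.mp hx2
    have hdmem : d ∈ (U ⊔ W₂) ⊓ D := by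
      refine Submodule.mem_inf.mpr ⟨?_, hd⟩
      rw [(add_sub_cancel_left w d).symm]
      exact Submodule.sub_mem _ (Submodule.mem_sup_left hxU) (Submodule.mem_sup_right hw)
    have hd0 : d = 0 := by
      have := hD.1.eq_bot ▸ hdmem
      simpa [disjoint_iff.mp hD.1] using hdmem
    subst hd0
    have : w + 0 ∈ U ⊓ W₂ := Submodule.mem_inf.mpr ⟨by simpa using hxU, by simpa using hw⟩
    rw [hdisj] at this
    simpa using this
  · rw [codisjoint_iff, ← sup_assoc]
    exact codisjoint_iff.mp hD.2

/-- Complement within a submodule. -/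
lemma exists_compl_within (W U : Submodule F M) (hWU : W ≤ U) :
    ∃ W₂ : Submodule F M, W₂ ≤ U ∧ W ⊔ W₂ = U ∧ W ⊓ W₂ = ⊥ := by
  obtain ⟨C, hC⟩ := Submodule.exists_isCompl W
  refine ⟨U ⊓ C, inf_le_left, ?_, ?_⟩
  · rw [inf_comm, ← sup_inf_assoc_of_le _ hWU, codisjoint_iff.mp hC.2, top_inf_eq]
  · rw [Submodule.eq_bot_iff]
    intro x hx
    obtain ⟨h1, h2, h3⟩ := Submodule.mem_inf.mp hx |>.imp id (Submodule.mem_inf.mp ·)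
    have : x ∈ W ⊓ C := Submodule.mem_inf.mpr ⟨h1, h3⟩
    simpa [disjoint_iff.mp hC.1] using this
end Aux

open scoped TensorProduct in
/-- Any idempotent with the same range also fixes `p`. -/
lemma VecVariety.MemL.fix_of_range {K : Type} [Field K] {P : PolyFunctor K} {X : VecVariety K P}
    {bc : P.BaseChange} {L : Type} [Field L] [Algebra K L] {V : FGModuleCat K}
    {p : L ⊗[K] P.obj V} {U : Submodule L (L ⊗[K] V)}
    {e : (L ⊗[K] V) →ₗ[L] (L ⊗[K] V)} (he : e ∘ₗ e = e) (hre : LinearMap.range e = U)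
    (hep : bc.mapL L e p = p)
    (π : (L ⊗[K] V) →ₗ[L] (L ⊗[K] V)) (hπ : ∀ x ∈ U, π x = x) :
    bc.mapL L π p = p := by
  have hcomp : π ∘ₗ e = e :=
    LinearMap.ext fun x => hπ (e x) (hre ▸ LinearMap.mem_range_self e x)
  have := congrArg (fun f => f p) (bc.mapL_comp L e π)
  simp only [LinearMap.comp_apply] at this
  rw [hcomp, hep] at this
  exact this.symm

open scoped TensorProduct in
/-- The key step: membership is closed under intersections. -/
lemma VecVariety.MemL.inf {K : Type} [Field K] {P : PolyFunctor K} {X : VecVariety K P}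
    {bc : P.BaseChange} {L : Type} [Field L] [Algebra K L] {V : FGModuleCat K}
    {p : L ⊗[K] P.obj V} {U₁ U₂ : Submodule L (L ⊗[K] V)}
    (h₁ : X.MemL bc L p U₁) (h₂ : X.MemL bc L p U₂) : X.MemL bc L p (U₁ ⊓ U₂) := by
  obtain ⟨hev, e₁, he₁, hr₁, hp₁⟩ := h₁
  obtain ⟨-, e₂, he₂, hr₂, hp₂⟩ := h₂
  set W : Submodule L (L ⊗[K] V) := U₁ ⊓ U₂ with hW
  -- a complement `W₂` of `W` inside `U₂`
  obtain ⟨W₂, hW₂U₂, hsup, hinf⟩ := exists_compl_within W U₂ inf_le_right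
  -- `W₂` is disjoint from `U₁`
  have hdisj : U₁ ⊓ W₂ = ⊥ := by
    rw [Submodule.eq_bot_iff]
    intro x hx
    obtain ⟨hx1, hx2⟩ := Submodule.mem_inf.mp hx
    have : x ∈ W ⊓ W₂ := Submodule.mem_inf.mpr
      ⟨Submodule.mem_inf.mpr ⟨hx1, hW₂U₂ hx2⟩, hx2⟩
    rw [hinf] at this; simpa using this
  -- extend `W₂` to a complement `C₁` of `U₁`
  obtain ⟨C₁, hW₂C₁, hC₁⟩ := exists_compl_ge U₁ W₂ hdisj
  -- the projection onto `U₁` along `C₁`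
  set π₁ : (L ⊗[K] V) →ₗ[L] (L ⊗[K] V) :=
    U₁.subtype ∘ₗ (U₁.projectionOnto C₁ hC₁) with hπ₁def
  have hπ₁left : ∀ x ∈ U₁, π₁ x = x := fun x hx => by
    exact congrArg (U₁.subtype)
      (Submodule.projectionOnto_apply_of_mem_left hC₁ hx)
  have hπ₁right : ∀ x ∈ C₁, π₁ x = 0 := fun x hx => by
    simp [hπ₁def, Submodule.projectionOnto_apply_of_mem_right hC₁ hx]
  -- the candidate idempotent
  set e : (L ⊗[K] V) →ₗ[L] (L ⊗[K] V) := π₁ ∘ₗ e₂ with hedef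
  -- `e` maps everything into `W`, and fixes `W` pointwise
  have hrange_le : ∀ x, e x ∈ W := by
    intro x
    have : e₂ x ∈ U₂ := hr₂ ▸ LinearMap.mem_range_self e₂ x
    rw [← hsup] at this
    obtain ⟨w, hw, w₂, hw₂, hsum⟩ := Submodule.mem_sup.mp this
    have : e x = w := by
      simp only [hedef, LinearMap.comp_apply, ← hsum, map_add]
      rw [hπ₁left w (Submodule.mem_inf.mp hw).1, hπ₁right w₂ (hW₂C₁ hw₂), add_zero]
    rw [this]; exact hw
  have hfix : ∀ x ∈ W, e x = x := by
    intro x hx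
    obtain ⟨hx1, hx2⟩ := Submodule.mem_inf.mp hx
    simp only [hedef, LinearMap.comp_apply]
    rw [idem_fix he₂ (hr₂ ▸ hx2), hπ₁left x hx1]
  refine ⟨hev, e, ?_, ?_, ?_⟩
  · exact LinearMap.ext fun x => hfix (e x) (hrange_le x)
  · apply le_antisymm
    · rintro y ⟨x, rfl⟩; exact hrange_le x
    · intro x hx; exact ⟨x, hfix x hx⟩
  · have := congrArg (fun f => f p) (bc.mapL_comp L e₂ π₁)
    simp only [LinearMap.comp_apply] at this
    rw [← hedef] at this
    rw [this, hp₂]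
    exact VecVariety.MemL.fix_of_range (X := X) he₁ hr₁ hp₁ π₁ hπ₁left

open scoped TensorProduct in
lemma VecVariety.memL_top {K : Type} [Field K] {P : PolyFunctor K} (X : VecVariety K P)
    (bc : P.BaseChange) (L : Type) [Field L] [Algebra K L] {V : FGModuleCat K}
    (p : L ⊗[K] P.obj V) (hp : ∀ f ∈ X.ideal V, evalAtL K L p f = 0) :
    X.MemL bc L p ⊤ :=
  ⟨hp, LinearMap.id, by ext x; rfl, LinearMap.range_id, by rw [bc.mapL_id]; rfl⟩

open scoped TensorProduct in
/-- For any `L`-valued point `p` of `X(V)` there is a unique minimal `L`-subspace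
`U ⊆ V ⊗ L` with `p ∈ X_L(U)`; in particular if `p ∈ X_L(U₁)` and `p ∈ X_L(U₂)`
then `p ∈ X_L(U₁ ∩ U₂)`. -/
theorem exists_unique_minimal_subspace
    (K : Type) [Field K] [CharZero K] (P : PolyFunctor K) (bc : P.BaseChange)
    (X : VecVariety K P) (V : FGModuleCat K)
    (L : Type) [Field L] [Algebra K L] (p : L ⊗[K] P.obj V)
    (hp : ∀ f ∈ X.ideal V, evalAtL K L p f = 0) :
    (∃! U : Submodule L (L ⊗[K] V),
      X.MemL bc L p U ∧ ∀ U' : Submodule L (L ⊗[K] V), X.MemL bc L p U' → U ≤ U') ∧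
    (∀ U₁ U₂ : Submodule L (L ⊗[K] V),
      X.MemL bc L p U₁ → X.MemL bc L p U₂ → X.MemL bc L p (U₁ ⊓ U₂)) := by
  classical
  have hint : ∀ U₁ U₂ : Submodule L (L ⊗[K] V),
      X.MemL bc L p U₁ → X.MemL bc L p U₂ → X.MemL bc L p (U₁ ⊓ U₂) :=
    fun _ _ h₁ h₂ => h₁.inf h₂
  refine ⟨?_, hint⟩
  have hfin : Module.Finite L (L ⊗[K] V) := inferInstance
  obtain ⟨U, hU, hUmin⟩ := IsArtinian.set_has_minimal (R := L) (M := L ⊗[K] V)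
    {U | X.MemL bc L p U} ⟨⊤, X.memL_top bc L p hp⟩
  have hle : ∀ U' : Submodule L (L ⊗[K] V), X.MemL bc L p U' → U ≤ U' := by
    intro U' hU'
    have hmem : X.MemL bc L p (U ⊓ U') := hint U U' hU hU'
    have : ¬ (U ⊓ U' < U) := hUmin _ hmem
    have heq : U ⊓ U' = U := (lt_or_eq_of_le (inf_le_left : U ⊓ U' ≤ U)).resolve_left this
    exact heq ▸ inf_le_right
  refine ⟨U, ⟨hU, hle⟩, ?_⟩
  rintro U'' ⟨hU'', hle''⟩
  exact le_antisymm (hle'' U hU) (hle U'' hU'')
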